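/- arXiv:1607.08342 — 2 statements merged into one kernel-verified Lean document; each statement's English description precedes it below -/
import Mathlib

section
/- Let [b,e] be a (p-1)-segment of X^{p-1} and let Q^p[i] denote the p-th symbol of the suffix X^{p-1}[i] (the sentinel if the suffix is shorter than p). Then X^p[b..e] is obtained from X^{p-1}[b..e] by stably sorting the positions b,...,e by the key Q^p: the suffix X^{p-1}[i] appears in X^p at position b + r − 1, where r = (number of positions j in [b,e] with Q^p[j] < Q^p[i]) + (number of positions j in [b,i] with Q^p[j] = Q^p[i]). -/
open scoped Classical

/-- Symbol type for suffixes: ranked sentinels (ordered by (suffix length, string index))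
below all regular alphabet symbols. -/
abbrev SSym (A : Type*) := (ℕ ×ₗ ℕ) ⊕ₗ A

variable {A : Type*} [LinearOrder A] {m k : ℕ}

/-- `symAt s (q, l) t` is the `t`-th symbol (0-indexed) of the `l`-suffix of the
string `s q` (a string of length `k`), padded beyond its end with its own ranked sentinel. -/
def symAt (s : Fin m → Fin k → A) (o : Fin m × Fin (k+1)) (t : ℕ) : SSym A :=
  if _h : t < (o.2 : ℕ) then
    toLex (Sum.inr (s o.1 ⟨k - (o.2 : ℕ) + t, by have := o.2.isLt; omega⟩))
  else
    toLex (Sum.inl (toLex ((o.2 : ℕ), (o.1 : ℕ))))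

/-- The `p`-prefix of the suffix occurrence `o`. -/
def pprefix (s : Fin m → Fin k → A) (p : ℕ) (o : Fin m × Fin (k+1)) : List (SSym A) :=
  List.ofFn fun t : Fin p => symAt s o t

/-- The full suffix string of occurrence `o` (its `l` symbols followed by its sentinel). -/
def suffStr (s : Fin m → Fin k → A) (o : Fin m × Fin (k+1)) : List (SSym A) :=
  List.ofFn fun t : Fin ((o.2 : ℕ) + 1) => symAt s o t

/-- The order `≺_p`: compare `p`-prefixes lexicographically, then suffix lengths,
then string indices. -/
def precP (s : Fin m → Fin k → A) (p : ℕ) (α β : Fin m × Fin (k+1)) : Prop :=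
  List.Lex (· < ·) (pprefix s p α) (pprefix s p β) ∨
    (pprefix s p α = pprefix s p β ∧
      ((α.2 : ℕ) < (β.2 : ℕ) ∨ ((α.2 : ℕ) = (β.2 : ℕ) ∧ (α.1 : ℕ) < (β.1 : ℕ))))

/-- Full lexicographic order on suffix occurrences, ties broken by length then string index. -/
def fullOrd (s : Fin m → Fin k → A) (α β : Fin m × Fin (k+1)) : Prop :=
  List.Lex (· < ·) (suffStr s α) (suffStr s β) ∨
    (suffStr s α = suffStr s β ∧
      ((α.2 : ℕ) < (β.2 : ℕ) ∨ ((α.2 : ℕ) = (β.2 : ℕ) ∧ (α.1 : ℕ) < (β.1 : ℕ))))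

/-- `[b,e]` is the `p`-segment of position `i` in the sorted array `X`:
a position `j` carries the same `p`-prefix as position `i` iff `b ≤ j ≤ e`. -/
def isSeg (s : Fin m → Fin k → A) (p : ℕ) {n : ℕ}
    (X : Fin n → Fin m × Fin (k+1)) (b e i : Fin n) : Prop :=
  b ≤ i ∧ i ≤ e ∧ ∀ j, (pprefix s p (X j) = pprefix s p (X i) ↔ b ≤ j ∧ j ≤ e)

/-- Position `i` is the start of its `p`-segment in the sorted array `X`. -/
def isStart (s : Fin m → Fin k → A) (p : ℕ) {n : ℕ}
    (X : Fin n → Fin m × Fin (k+1)) (i : Fin n) : Prop :=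
  ∀ j, j < i → pprefix s p (X j) ≠ pprefix s p (X i)


section Aux
variable {S : Type*} [LinearOrder S]

lemma lex_asymm' {a b : List S} (h : List.Lex (· < ·) a b) : ¬ List.Lex (· < ·) b a :=
  Std.Asymm.asymm a b h

lemma lex_irrefl' (a : List S) : ¬ List.Lex (· < ·) a a := fun h => lex_asymm' h h

lemma lex_trichot (a b : List S) :
    List.Lex (· < ·) a b ∨ a = b ∨ List.Lex (· < ·) b a :=
  trichotomous a b

lemma lex_concat : ∀ (a b : List S), a.length = b.length → ∀ x y : S,
    (List.Lex (· < ·) (a ++ [x]) (b ++ [y]) ↔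
      List.Lex (· < ·) a b ∨ (a = b ∧ x < y))
  | [], [], _, x, y => by
      simp only [List.nil_append]
      constructor
      · intro h
        cases h with
        | rel h => exact Or.inr ⟨by trivial, h⟩
        | cons h => exact absurd h List.not_lex_nil
      · rintro (h | ⟨-, h⟩)
        · exact absurd h List.not_lex_nil
        · exact List.Lex.rel h
  | [], _ :: _, h, _, _ => by simp at h
  | _ :: _, [], h, _, _ => by simp at h
  | c :: a, d :: b, h, x, y => by
      simp only [List.length_cons, Nat.succ.injEq] at h
      simp only [List.cons_append]
      constructor
      · intro hlex
        cases hlex with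
        | rel hr => exact Or.inl (List.Lex.rel hr)
        | cons ht =>
            rcases (lex_concat a b h x y).1 ht with h1 | ⟨rfl, h2⟩
            · exact Or.inl (List.Lex.cons h1)
            · exact Or.inr ⟨rfl, h2⟩
      · rintro (hlex | ⟨heq, hxy⟩)
        · cases hlex with
          | rel hr => exact List.Lex.rel hr
          | cons ht => exact List.Lex.cons ((lex_concat a b h x y).2 (Or.inl ht))
        · obtain ⟨rfl, rfl⟩ : c = d ∧ a = b := by
            injection heq with h1 h2; exact ⟨h1, h2⟩
          exact List.Lex.cons ((lex_concat a a rfl x y).2 (Or.inr ⟨rfl, hxy⟩))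
end Aux

section Prec
variable {A : Type*} [LinearOrder A] {m k : ℕ}

lemma precP_asymm (s : Fin m → Fin k → A) (p : ℕ) {α β : Fin m × Fin (k+1)}
    (h : precP s p α β) : ¬ precP s p β α := by
  rintro (h2 | ⟨he2, ht2⟩) <;> rcases h with h1 | ⟨he1, ht1⟩
  · exact lex_asymm' h1 h2
  · rw [he1] at h2; exact lex_irrefl' _ h2
  · rw [he2] at h1; exact lex_irrefl' _ h1
  · omega

lemma precP_irrefl (s : Fin m → Fin k → A) (p : ℕ) (α : Fin m × Fin (k+1)) :
    ¬ precP s p α α := fun h => precP_asymm s p h h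

lemma precP_total (s : Fin m → Fin k → A) (p : ℕ) {α β : Fin m × Fin (k+1)}
    (h : α ≠ β) : precP s p α β ∨ precP s p β α := by
  rcases lex_trichot (pprefix s p α) (pprefix s p β) with h1 | h1 | h1
  · exact Or.inl (Or.inl h1)
  · rcases Nat.lt_trichotomy (α.2 : ℕ) (β.2 : ℕ) with h2 | h2 | h2
    · exact Or.inl (Or.inr ⟨h1, Or.inl h2⟩)
    · rcases Nat.lt_trichotomy (α.1 : ℕ) (β.1 : ℕ) with h3 | h3 | h3
      · exact Or.inl (Or.inr ⟨h1, Or.inr ⟨h2, h3⟩⟩)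
      · exact absurd (Prod.ext (Fin.ext h3) (Fin.ext h2)) h
      · exact Or.inr (Or.inr ⟨h1.symm, Or.inr ⟨h2.symm, h3⟩⟩)
    · exact Or.inr (Or.inr ⟨h1.symm, Or.inl h2⟩)
  · exact Or.inr (Or.inl h1)

/-- index in a sorted bijective array equals number of smaller elements -/
lemma idx_eq_card {n : ℕ} (s : Fin m → Fin k → A) (p : ℕ)
    (X : Fin n → Fin m × Fin (k+1)) (hinj : Function.Injective X)
    (hsort : ∀ i j, i < j → precP s p (X i) (X j)) (i : Fin n) :
    (Finset.univ.filter (fun j => precP s p (X j) (X i))).card = (i : ℕ) := by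
  have : Finset.univ.filter (fun j => precP s p (X j) (X i)) = Finset.Iio i := by
    ext j
    simp only [Finset.mem_filter, Finset.mem_univ, true_and, Finset.mem_Iio]
    constructor
    · intro h
      rcases lt_trichotomy j i with h1 | rfl | h1
      · exact h1
      · exact absurd h (precP_irrefl s p _)
      · exact absurd h (precP_asymm s p (hsort i j h1))
    · exact hsort j i
  rw [this, Fin.card_Iio]

lemma pprefix_succ (s : Fin m → Fin k → A) (q : ℕ) (o : Fin m × Fin (k+1)) :
    pprefix s (q + 1) o = pprefix s q o ++ [symAt s o q] := by
  rw [pprefix, List.ofFn_succ']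
  simp [pprefix, List.concat_eq_append, Fin.val_last]

lemma pprefix_length (s : Fin m → Fin k → A) (q : ℕ) (o : Fin m × Fin (k+1)) :
    (pprefix s q o).length = q := by simp [pprefix]

end Prec

/-- Let `[b,e]` be a `(p-1)`-segment of `X^{p-1}` and let `Q j` be the
`p`-th symbol (0-indexed position `p-1`) of the suffix `X^{p-1} j` (a sentinel if the
suffix is shorter than `p`).  Then `X^p[b..e]` is obtained from `X^{p-1}[b..e]` by stably
sorting the positions `b, …, e` by the key `Q`: the suffix `X^{p-1} i` appears in `X^p`
at position `b + r - 1`, where `r` is the number of positions `j ∈ [b,e]` with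
`Q j < Q i` plus the number of positions `j ∈ [b,i]` with `Q j = Q i`. -/
theorem segment_stable_sort (s : Fin m → Fin k → A) (p : ℕ) (hp : 1 ≤ p)
    (Xprev Xcur : Fin ((k + 1) * m) → Fin m × Fin (k + 1))
    (hbij1 : Function.Bijective Xprev)
    (hsort1 : ∀ i j, i < j → precP s (p - 1) (Xprev i) (Xprev j))
    (hbij2 : Function.Bijective Xcur)
    (hsort2 : ∀ i j, i < j → precP s p (Xcur i) (Xcur j))
    (b e : Fin ((k + 1) * m)) (hseg : isSeg s (p - 1) Xprev b e b) :
    ∀ i, b ≤ i → i ≤ e →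
      ∃ i' : Fin ((k + 1) * m),
        (i' : ℕ) + 1 = (b : ℕ) +
          (((Finset.Icc b e).filter
              (fun j => symAt s (Xprev j) (p - 1) < symAt s (Xprev i) (p - 1))).card +
            ((Finset.Icc b i).filter
              (fun j => symAt s (Xprev j) (p - 1) = symAt s (Xprev i) (p - 1))).card) ∧
        Xcur i' = Xprev i := by
  intro i hbi hie
  obtain ⟨q, rfl⟩ : ∃ q, p = q + 1 := ⟨p - 1, by omega⟩
  simp only [Nat.add_sub_cancel] at hsort1 hseg ⊢
  set Q : Fin ((k + 1) * m) → SSym A := fun j => symAt s (Xprev j) q with hQ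
  obtain ⟨hbb, hbe, hmem⟩ := hseg
  have hi : pprefix s q (Xprev i) = pprefix s q (Xprev b) := (hmem i).2 ⟨hbi, hie⟩
  have hpre : ∀ j, b ≤ j → j ≤ e → pprefix s q (Xprev j) = pprefix s q (Xprev i) :=
    fun j h1 h2 => ((hmem j).2 ⟨h1, h2⟩).trans hi.symm
  have hlen : ∀ (o o' : Fin m × Fin (k+1)),
      (pprefix s q o).length = (pprefix s q o').length := by
    intro o o'; rw [pprefix_length, pprefix_length]
  -- order within the segment is the tie-break order
  have hseg_lt : ∀ j1 j2, b ≤ j1 → j1 ≤ e → b ≤ j2 → j2 ≤ e →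
      (j1 < j2 ↔ (((Xprev j1).2 : ℕ) < ((Xprev j2).2 : ℕ) ∨
        (((Xprev j1).2 : ℕ) = ((Xprev j2).2 : ℕ) ∧ ((Xprev j1).1 : ℕ) < ((Xprev j2).1 : ℕ)))) := by
    have fwd : ∀ j1 j2, b ≤ j1 → j1 ≤ e → b ≤ j2 → j2 ≤ e → j1 < j2 →
        (((Xprev j1).2 : ℕ) < ((Xprev j2).2 : ℕ) ∨
          (((Xprev j1).2 : ℕ) = ((Xprev j2).2 : ℕ) ∧ ((Xprev j1).1 : ℕ) < ((Xprev j2).1 : ℕ))) := by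
      intro j1 j2 ha1 ha2 hb1 hb2 hlt
      rcases hsort1 j1 j2 hlt with hl | ⟨_, ht⟩
      · rw [hpre j1 ha1 ha2, hpre j2 hb1 hb2] at hl
        exact absurd hl (lex_irrefl' _)
      · exact ht
    intro j1 j2 ha1 ha2 hb1 hb2
    constructor
    · exact fwd j1 j2 ha1 ha2 hb1 hb2
    · intro ht
      by_contra hcon
      rcases eq_or_lt_of_le (not_lt.1 hcon) with heq | hlt
      · rw [heq] at ht; omega
      · have := fwd j2 j1 hb1 hb2 ha1 ha2 hlt; omega
  -- the comparison inside the segment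
  have hin : ∀ j, b ≤ j → j ≤ e →
      (precP s (q+1) (Xprev j) (Xprev i) ↔ (Q j < Q i ∨ (Q j = Q i ∧ j < i))) := by
    intro j hj1 hj2
    have hpj := hpre j hj1 hj2
    have hlen' : (pprefix s q (Xprev j)).length = (pprefix s q (Xprev i)).length :=
      hlen _ _
    constructor
    · rintro (h | ⟨he, ht⟩)
      · rw [pprefix_succ, pprefix_succ, lex_concat _ _ hlen'] at h
        rcases h with h | ⟨_, h⟩
        · rw [hpj] at h; exact absurd h (lex_irrefl' _)
        · exact Or.inl h
      · rw [pprefix_succ, pprefix_succ, hpj] at he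
        have hQe : Q j = Q i := by simpa using he
        exact Or.inr ⟨hQe, (hseg_lt j i hj1 hj2 hbi hie).2 ht⟩
    · rintro (h | ⟨hQe, hji⟩)
      · left
        rw [pprefix_succ, pprefix_succ, lex_concat _ _ hlen']
        exact Or.inr ⟨hpj, h⟩
      · right
        constructor
        · rw [pprefix_succ, pprefix_succ, hpj]
          exact congrArg (fun x => pprefix s q (Xprev i) ++ [x]) hQe
        · exact (hseg_lt j i hj1 hj2 hbi hie).1 hji
  -- positions before the segment are strictly smaller
  have houtlt : ∀ j, j < b → precP s (q+1) (Xprev j) (Xprev i) := by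
    intro j hjb
    have hlt : j < i := lt_of_lt_of_le hjb hbi
    rcases hsort1 j i hlt with hl | ⟨he, _⟩
    · left
      rw [pprefix_succ, pprefix_succ, lex_concat _ _ (hlen _ _)]
      exact Or.inl hl
    · exfalso
      have := (hmem j).1 (he.trans hi)
      exact absurd this.1 (not_le.2 hjb)
  -- positions after the segment are strictly larger
  have houtgt : ∀ j, e < j → ¬ precP s (q+1) (Xprev j) (Xprev i) := by
    intro j hej
    have hlt : i < j := lt_of_le_of_lt hie hej
    refine precP_asymm s (q+1) ?_
    rcases hsort1 i j hlt with hl | ⟨he, ht⟩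
    · left
      rw [pprefix_succ, pprefix_succ, lex_concat _ _ (hlen _ _)]
      exact Or.inl hl
    · exfalso
      have := (hmem j).1 (he.symm.trans hi)
      exact absurd this.2 (not_le.2 hej)
  -- the element in the new array
  set i' : Fin ((k + 1) * m) := (Equiv.ofBijective Xcur hbij2).symm (Xprev i) with hi'
  have hXci' : Xcur i' = Xprev i := (Equiv.ofBijective Xcur hbij2).apply_symm_apply (Xprev i)
  refine ⟨i', ?_, hXci'⟩
  have hidx : (Finset.univ.filter (fun j => precP s (q+1) (Xcur j) (Xcur i'))).card = (i' : ℕ) :=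
    idx_eq_card s (q+1) Xcur hbij2.injective hsort2 i'
  rw [hXci'] at hidx
  -- transfer the count from Xcur to Xprev
  set E : Fin ((k + 1) * m) ≃ Fin ((k + 1) * m) :=
    (Equiv.ofBijective Xprev hbij1).trans (Equiv.ofBijective Xcur hbij2).symm with hE'
  have hE : ∀ j, Xcur (E j) = Xprev j := fun j =>
    (Equiv.ofBijective Xcur hbij2).apply_symm_apply (Xprev j)
  have hcard : (Finset.univ.filter (fun j => precP s (q+1) (Xprev j) (Xprev i))).card =
      (Finset.univ.filter (fun j => precP s (q+1) (Xcur j) (Xprev i))).card := by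
    refine Finset.card_equiv E (fun j => ?_)
    simp [hE j]
  -- now do the counting over the three parts
  have huniv : (Finset.univ : Finset (Fin ((k + 1) * m))) =
      (Finset.Iio b ∪ Finset.Icc b e) ∪ Finset.Ioi e := by
    ext x
    simp only [Finset.mem_univ, Finset.mem_union, Finset.mem_Iio, Finset.mem_Icc,
      Finset.mem_Ioi, Fin.lt_def, Fin.le_def, true_iff]
    omega
  set P : Fin ((k + 1) * m) → Prop := fun j => precP s (q+1) (Xprev j) (Xprev i) with hP
  have hcard1 : (Finset.Iio b).filter P = Finset.Iio b := by
    refine Finset.filter_true_of_mem (fun j hj => ?_)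
    exact houtlt j (Finset.mem_Iio.1 hj)
  have hcard3 : (Finset.Ioi e).filter P = ∅ := by
    refine Finset.filter_false_of_mem (fun j hj => ?_)
    exact houtgt j (Finset.mem_Ioi.1 hj)
  have hcard2 : ((Finset.Icc b e).filter P).card =
      ((Finset.Icc b e).filter (fun j => Q j < Q i)).card +
        ((Finset.Icc b e).filter (fun j => Q j = Q i ∧ j < i)).card := by
    have : (Finset.Icc b e).filter P =
        (Finset.Icc b e).filter (fun j => Q j < Q i ∨ (Q j = Q i ∧ j < i)) := by
      refine Finset.filter_congr (fun j hj => ?_)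
      obtain ⟨h1, h2⟩ := Finset.mem_Icc.1 hj
      simpa using hin j h1 h2
    rw [this, Finset.filter_or, Finset.card_union_of_disjoint]
    rw [Finset.disjoint_filter]
    rintro j _ hlt ⟨heq, -⟩
    rw [heq] at hlt
    exact lt_irrefl _ hlt
  have herase : ((Finset.Icc b i).filter (fun j => Q j = Q i)).erase i =
      (Finset.Icc b e).filter (fun j => Q j = Q i ∧ j < i) := by
    ext j
    simp only [Finset.mem_erase, Finset.mem_filter, Finset.mem_Icc]
    constructor
    · rintro ⟨hne, ⟨h1, h2⟩, h3⟩
      exact ⟨⟨h1, le_trans h2 hie⟩, h3, lt_of_le_of_ne h2 hne⟩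
    · rintro ⟨⟨h1, _⟩, h3, h4⟩
      exact ⟨ne_of_lt h4, ⟨h1, le_of_lt h4⟩, h3⟩
  have hmemT : i ∈ (Finset.Icc b i).filter (fun j => Q j = Q i) :=
    Finset.mem_filter.2 ⟨Finset.mem_Icc.2 ⟨hbi, le_refl i⟩, rfl⟩
  have hcnteq : ((Finset.Icc b e).filter (fun j => Q j = Q i ∧ j < i)).card + 1 =
      ((Finset.Icc b i).filter (fun j => Q j = Q i)).card := by
    rw [← herase, Finset.card_erase_of_mem hmemT]
    have := Finset.card_pos.2 ⟨i, hmemT⟩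
    omega
  have hd1 : Disjoint ((Finset.Iio b).filter P) ((Finset.Icc b e).filter P) := by
    rw [Finset.disjoint_left]
    intro x hx hx'
    simp only [Finset.mem_filter, Finset.mem_Iio, Finset.mem_Icc] at hx hx'
    exact absurd hx'.1.1 (not_le.2 hx.1)
  have hd2 : Disjoint ((Finset.Iio b).filter P ∪ (Finset.Icc b e).filter P)
      ((Finset.Ioi e).filter P) := by
    rw [Finset.disjoint_left]
    intro x hx hx'
    simp only [Finset.mem_union, Finset.mem_filter, Finset.mem_Iio, Finset.mem_Icc,
      Finset.mem_Ioi] at hx hx'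
    rcases hx with h | h
    · exact absurd hbe (not_le.2 (lt_trans hx'.1 h.1))
    · exact absurd h.1.2 (not_le.2 hx'.1)
  have htotal : (Finset.univ.filter P).card =
      (b : ℕ) + ((Finset.Icc b e).filter (fun j => Q j < Q i)).card +
        ((Finset.Icc b e).filter (fun j => Q j = Q i ∧ j < i)).card := by
    rw [huniv, Finset.filter_union, Finset.filter_union,
      Finset.card_union_of_disjoint hd2, Finset.card_union_of_disjoint hd1,
      hcard1, hcard3, Fin.card_Iio, hcard2, Finset.card_empty]
    omega
  rw [← hcard] at hidx
  have hg1 : ((Finset.Icc b e).filter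
      (fun j => symAt s (Xprev j) q < symAt s (Xprev i) q)) =
      ((Finset.Icc b e).filter (fun j => Q j < Q i)) := rfl
  have hg2 : ((Finset.Icc b i).filter
      (fun j => symAt s (Xprev j) q = symAt s (Xprev i) q)) =
      ((Finset.Icc b i).filter (fun j => Q j = Q i)) := rfl
  rw [hg1, hg2, ← hidx, htotal]
  omega
end

section
/- Let L be the length of the longest substring occurring at least twice among the strings of S (counting occurrences in distinct strings or distinct positions). Then every (L+1)-prefix of a suffix of length at least L+1 is unique among all suffixes; consequently every (L+1)-segment of X^{L+1} has width 1, and X^p = X^{L+1} = X for all p ≥ L+1. -/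
open scoped Classical

variable {A : Type*} [LinearOrder A] {m k : ℕ}

/- ------------------ auxiliary lemmas ------------------ -/

lemma lex_cons_ne {T : Type*} [LinearOrder T] {a b : T} {u v : List T} (h : a ≠ b) :
    List.Lex (· < ·) (a :: u) (b :: v) ↔ a < b := by
  constructor
  · intro hl
    cases hl with
    | cons hl => exact absurd rfl h
    | rel hr => exact hr
  · exact List.Lex.rel

lemma lex_ofFn_iff {T : Type*} [LinearOrder T] (t0 : ℕ) :
    ∀ (f g : ℕ → T), (∀ t, t < t0 → f t = g t) → f t0 ≠ g t0 →
    ∀ (n n' : ℕ), t0 < n → t0 < n' →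
    (List.Lex (· < ·) (List.ofFn fun i : Fin n => f i) (List.ofFn fun i : Fin n' => g i) ↔
      f t0 < g t0) := by
  induction t0 with
  | zero =>
    intro f g _ hne n n' hn hn'
    obtain ⟨n, rfl⟩ := Nat.exists_eq_succ_of_ne_zero (by omega : n ≠ 0)
    obtain ⟨n', rfl⟩ := Nat.exists_eq_succ_of_ne_zero (by omega : n' ≠ 0)
    rw [List.ofFn_succ, List.ofFn_succ]
    simpa using lex_cons_ne (by simpa using hne)
  | succ t0 ih =>
    intro f g hagree hne n n' hn hn'
    obtain ⟨n, rfl⟩ := Nat.exists_eq_succ_of_ne_zero (by omega : n ≠ 0)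
    obtain ⟨n', rfl⟩ := Nat.exists_eq_succ_of_ne_zero (by omega : n' ≠ 0)
    rw [List.ofFn_succ, List.ofFn_succ]
    have h0 : f ((0 : Fin (n+1)) : ℕ) = g ((0 : Fin (n'+1)) : ℕ) := by
      simpa using hagree 0 (Nat.succ_pos _)
    rw [h0, List.lex_cons_iff]
    have := ih (fun t => f (t+1)) (fun t => g (t+1))
      (fun t ht => hagree (t+1) (by omega)) hne n n' (by omega) (by omega)
    simpa [Fin.val_succ] using this

lemma exists_firstDiff (s : Fin m → Fin k → A) (L : ℕ)
    (hL : ∀ (t : ℕ) (q q' : Fin m) (i i' : ℕ) (hi : k ≥ i + t) (hi' : k ≥ i' + t),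
      ((q : ℕ), i) ≠ ((q' : ℕ), i') →
      (∀ u, (hu : u < t) → s q ⟨i + u, by omega⟩ = s q' ⟨i' + u, by omega⟩) →
      t ≤ L)
    {α β : Fin m × Fin (k+1)} (hne : α ≠ β) :
    ∃ t0, t0 < L + 1 ∧ t0 ≤ (α.2 : ℕ) ∧ t0 ≤ (β.2 : ℕ) ∧
      (∀ t, t < t0 → symAt s α t = symAt s β t) ∧ symAt s α t0 ≠ symAt s β t0 := by
  have hkα := α.2.isLt
  have hkβ := β.2.isLt
  have hM : symAt s α (min (α.2 : ℕ) (β.2 : ℕ)) ≠ symAt s β (min (α.2 : ℕ) (β.2 : ℕ)) := by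
    intro heq
    apply hne
    unfold symAt at heq
    split_ifs at heq with h1 h2 h2
    · omega
    · simp at heq
    · simp at heq
    · simp only [toLex_inj, Sum.inl.injEq, Prod.mk.injEq] at heq
      exact Prod.ext (Fin.val_injective heq.2) (Fin.val_injective heq.1)
  have hex : ∃ t, symAt s α t ≠ symAt s β t := ⟨_, hM⟩
  have hle : Nat.find hex ≤ min (α.2 : ℕ) (β.2 : ℕ) := Nat.find_min' hex hM
  refine ⟨Nat.find hex, ?_, by omega, by omega,
    fun t ht => not_ne_iff.mp (Nat.find_min hex ht), Nat.find_spec hex⟩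
  by_contra hge
  push_neg at hge
  have hne' : ((α.1 : ℕ), k - (α.2 : ℕ)) ≠ ((β.1 : ℕ), k - (β.2 : ℕ)) := by
    intro h
    apply hne
    simp only [Prod.mk.injEq] at h
    exact Prod.ext (Fin.val_injective h.1) (Fin.val_injective (by omega : (α.2:ℕ) = (β.2:ℕ)))
  have := hL (L+1) α.1 β.1 (k - (α.2 : ℕ)) (k - (β.2 : ℕ)) (by omega) (by omega) hne'
    (fun u hu => by
      have h := not_ne_iff.mp (Nat.find_min hex (by omega : u < Nat.find hex))
      unfold symAt at h
      rw [dif_pos (by omega), dif_pos (by omega)] at h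
      simpa [toLex_inj, Sum.inr.injEq] using h)
  omega

lemma pprefix_inj (s : Fin m → Fin k → A) (L : ℕ)
    (hL : ∀ (t : ℕ) (q q' : Fin m) (i i' : ℕ) (hi : k ≥ i + t) (hi' : k ≥ i' + t),
      ((q : ℕ), i) ≠ ((q' : ℕ), i') →
      (∀ u, (hu : u < t) → s q ⟨i + u, by omega⟩ = s q' ⟨i' + u, by omega⟩) →
      t ≤ L)
    {α β : Fin m × Fin (k+1)} {p : ℕ} (hp : L + 1 ≤ p)
    (h : pprefix s p α = pprefix s p β) : α = β := by
  by_contra hne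
  obtain ⟨t0, ht0L, _, _, _, hd⟩ := exists_firstDiff s L hL hne
  unfold pprefix at h
  exact hd (congrFun (List.ofFn_inj.mp h) ⟨t0, by omega⟩)

lemma orders_agree (s : Fin m → Fin k → A) (L : ℕ)
    (hL : ∀ (t : ℕ) (q q' : Fin m) (i i' : ℕ) (hi : k ≥ i + t) (hi' : k ≥ i' + t),
      ((q : ℕ), i) ≠ ((q' : ℕ), i') →
      (∀ u, (hu : u < t) → s q ⟨i + u, by omega⟩ = s q' ⟨i' + u, by omega⟩) →
      t ≤ L)
    {α β : Fin m × Fin (k+1)} (hne : α ≠ β) :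
    (∀ p, L + 1 ≤ p → (precP s p α β ↔ fullOrd s α β)) ∧
      (fullOrd s α β → ¬ fullOrd s β α) := by
  obtain ⟨t0, ht0L, hα, hβ, hagree, hd⟩ := exists_firstDiff s L hL hne
  have hlexP : ∀ p, L + 1 ≤ p →
      (List.Lex (· < ·) (pprefix s p α) (pprefix s p β) ↔ symAt s α t0 < symAt s β t0) := by
    intro p hp
    unfold pprefix
    exact lex_ofFn_iff t0 _ _ hagree hd p p (by omega) (by omega)
  have hlexS : List.Lex (· < ·) (suffStr s α) (suffStr s β) ↔
      symAt s α t0 < symAt s β t0 := by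
    unfold suffStr
    exact lex_ofFn_iff t0 _ _ hagree hd _ _ (by omega) (by omega)
  have hlexS' : List.Lex (· < ·) (suffStr s β) (suffStr s α) ↔
      symAt s β t0 < symAt s α t0 := by
    unfold suffStr
    exact lex_ofFn_iff t0 _ _ (fun t ht => (hagree t ht).symm) (Ne.symm hd) _ _
      (by omega) (by omega)
  have hpne : ∀ p, L + 1 ≤ p → pprefix s p α ≠ pprefix s p β :=
    fun p hp h => hne (pprefix_inj s L hL hp h)
  have hsne : suffStr s α ≠ suffStr s β := by
    intro h
    have h1' : t0 < (suffStr s α).length := by simp [suffStr]; omega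
    have h2' : t0 < (suffStr s β).length := by simp [suffStr]; omega
    have hg : (suffStr s α)[t0]'h1' = (suffStr s β)[t0]'h2' := by simp only [h]
    simp only [suffStr, List.getElem_ofFn] at hg
    exact hd hg
  have e1 : ∀ p, L + 1 ≤ p → (precP s p α β ↔ symAt s α t0 < symAt s β t0) := by
    intro p hp
    constructor
    · rintro (h | ⟨h, -⟩)
      · exact (hlexP p hp).mp h
      · exact absurd h (hpne p hp)
    · intro h; exact Or.inl ((hlexP p hp).mpr h)
  have e2 : fullOrd s α β ↔ symAt s α t0 < symAt s β t0 := by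
    constructor
    · rintro (h | ⟨h, -⟩)
      · exact hlexS.mp h
      · exact absurd h hsne
    · intro h; exact Or.inl (hlexS.mpr h)
  have e3 : fullOrd s β α ↔ symAt s β t0 < symAt s α t0 := by
    constructor
    · rintro (h | ⟨h, -⟩)
      · exact hlexS'.mp h
      · exact absurd h (Ne.symm hsne)
    · intro h; exact Or.inl (hlexS'.mpr h)
  exact ⟨fun p hp => (e1 p hp).trans e2.symm,
    fun h h' => lt_asymm (e2.mp h) (e3.mp h')⟩

/-- Let `L` be (an upper bound witnessing) the length of the longest
substring occurring at least twice among the strings of `S` (occurrences at distinct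
strings or distinct positions).  Then every `(L+1)`-prefix of a suffix of length at least
`L+1` is unique among all suffixes; consequently every `(L+1)`-segment of `X^{L+1}` has
width `1`, and `X^p = X^{L+1} = X` for all `p ≥ L+1`. -/
theorem longest_repeat_bounds_iterations (s : Fin m → Fin k → A)
    (hdist : Function.Injective s) (L : ℕ)
    (hL : ∀ (t : ℕ) (q q' : Fin m) (i i' : ℕ) (hi : i + t ≤ k) (hi' : i' + t ≤ k),
      ((q : ℕ), i) ≠ ((q' : ℕ), i') →
      (∀ u, (hu : u < t) → s q ⟨i + u, by omega⟩ = s q' ⟨i' + u, by omega⟩) →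
      t ≤ L)
    (X : ℕ → Fin ((k + 1) * m) → Fin m × Fin (k + 1))
    (hbij : ∀ p, Function.Bijective (X p))
    (hsort : ∀ p i j, i < j → precP s p (X p i) (X p j))
    (x : Fin ((k + 1) * m) → Fin m × Fin (k + 1))
    (hxbij : Function.Bijective x)
    (hxsort : ∀ i j, i < j → fullOrd s (x i) (x j)) :
    (∀ α β : Fin m × Fin (k + 1), L + 1 ≤ (α.2 : ℕ) → L + 1 ≤ (β.2 : ℕ) →
      pprefix s (L + 1) α = pprefix s (L + 1) β → α = β) ∧
    (∀ i j : Fin ((k + 1) * m),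
      pprefix s (L + 1) (X (L + 1) i) = pprefix s (L + 1) (X (L + 1) j) → i = j) ∧
    (∀ p, L + 1 ≤ p → ∀ i, X p i = x i) := by
  refine ⟨fun α β _ _ h => pprefix_inj s L hL le_rfl h,
    fun i j h => (hbij (L + 1)).1 (pprefix_inj s L hL le_rfl h), ?_⟩
  intro p hp i
  have hinj := (hbij p).1
  set e := Equiv.ofBijective x hxbij with he
  set σ : Fin ((k + 1) * m) → Fin ((k + 1) * m) := fun i => e.symm (X p i) with hσ
  have hxσ : ∀ i, x (σ i) = X p i := fun i => e.apply_symm_apply (X p i)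
  have hσinj : Function.Injective σ := fun a b hab => hinj (e.symm.injective hab)
  have hmono : StrictMono σ := by
    intro a b hab
    have hne : X p a ≠ X p b := fun h => absurd (hinj h) hab.ne
    have horders := orders_agree s L hL hne
    have hfull : fullOrd s (X p a) (X p b) := (horders.1 p hp).mp (hsort p a b hab)
    rcases lt_trichotomy (σ a) (σ b) with h | h | h
    · exact h
    · exact absurd (hσinj h) hab.ne
    · exfalso
      have h2 : fullOrd s (x (σ b)) (x (σ a)) := hxsort _ _ h
      rw [hxσ, hxσ] at h2
      exact horders.2 hfull h2
  have hσsurj : Function.Surjective σ := fun b => by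
    obtain ⟨a, ha⟩ := (hbij p).2 (e b)
    exact ⟨a, by simp [hσ, ha]⟩
  have inst : WellFoundedLT (Fin ((k + 1) * m)) := inferInstance
  have hid : σ = id := by
    have := @StrictMono.range_inj (Fin ((k + 1) * m)) (Fin ((k + 1) * m))
      inferInstance inferInstance inst σ id hmono strictMono_id
    exact this.mp (by rw [Set.range_id, Set.range_eq_univ.mpr hσsurj])
  calc X p i = x (σ i) := (hxσ i).symm
    _ = x i := by rw [hid]; rfl
end
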